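/- Let A : ℕ → Bool and let S ⊆ ℕ be the set of codes of the finite initial segments of A, i.e., S = { encode([A(0), A(1), …, A(n−1)]) : n ∈ ℕ } under a fixed computable injective encoding of finite boolean strings into ℕ. Then: (1) S is Turing reducible to A; and (2) for every B : ℕ → Bool, if C ⊆ S is infinite and the characteristic function of C is computable relative to an oracle for B, then A is Turing reducible to B. -/

import Mathlib

/-- Partial recursiveness relative to an oracle `O : ℕ → ℕ`: the least class containing
the basic functions and the oracle, closed under pairing, composition, primitive
recursion, and unbounded search.  (This mirrors Mathlib's `Nat.Partrec`, with the extra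
`oracle` constructor.) -/
inductive RecursiveIn' (O : ℕ → ℕ) : (ℕ →. ℕ) → Prop
  | zero : RecursiveIn' O (pure 0)
  | succ : RecursiveIn' O Nat.succ
  | left : RecursiveIn' O ↑fun n : ℕ => n.unpair.1
  | right : RecursiveIn' O ↑fun n : ℕ => n.unpair.2
  | oracle : RecursiveIn' O ↑O
  | pair {f g} : RecursiveIn' O f → RecursiveIn' O g →
      RecursiveIn' O fun n => Nat.pair <$> f n <*> g n
  | comp {f g} : RecursiveIn' O f → RecursiveIn' O g → RecursiveIn' O fun n => g n >>= f
  | prec {f g} : RecursiveIn' O f → RecursiveIn' O g →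
      RecursiveIn' O (Nat.unpaired fun a n =>
        n.rec (f a) fun y IH => do let i ← IH; g (Nat.pair a (Nat.pair y i)))
  | rfind {f} : RecursiveIn' O f →
      RecursiveIn' O fun a => Nat.rfind fun n => (fun m => m = 0) <$> f (Nat.pair a n)

/-- `X` is Turing reducible to `Y` (`X ≤_T Y`): the characteristic function of `X`
(as a total partial function) is recursive in an oracle for the characteristic
function of `Y`. -/
def TuringReducible' (X Y : Set ℕ) : Prop :=
  RecursiveIn' (Y.indicator 1) fun n => Part.some (X.indicator 1 n)

namespace RecursiveIn'

variable {O : ℕ → ℕ}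

theorem of_eq {f g : ℕ →. ℕ} (hf : RecursiveIn' O f) (h : ∀ n, f n = g n) : RecursiveIn' O g :=
  (funext h : f = g) ▸ hf

theorem of_partrec {f : ℕ →. ℕ} (hf : Nat.Partrec f) : RecursiveIn' O f := by
  induction hf with
  | zero => exact .zero
  | succ => exact .succ
  | left => exact .left
  | right => exact .right
  | pair _ _ ihf ihg => exact .pair ihf ihg
  | comp _ _ ihf ihg => exact .comp ihf ihg
  | prec _ _ ihf ihg => exact .prec ihf ihg
  | rfind _ ihf => exact .rfind ihf

theorem of_computable {f : ℕ → ℕ} (hf : Computable f) : RecursiveIn' O ↑f :=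
  of_partrec (Partrec.nat_iff.1 hf)

theorem of_computable' {f : ℕ → ℕ} (hf : Computable f) :
    RecursiveIn' O fun n => Part.some (f n) :=
  of_computable hf

theorem oracle' : RecursiveIn' O fun n => Part.some (O n) := oracle

/-- Compose a recursive-in function with a computable function (inside). -/
theorem totalCompGen {f : ℕ →. ℕ} {g : ℕ → ℕ} (hf : RecursiveIn' O f) (hg : Computable g) :
    RecursiveIn' O fun n => f (g n) :=
  (hf.comp (of_computable hg)).of_eq fun n => by
    show Part.bind _ _ = _
    exact Part.bind_some _ _

theorem totalComp' {f g : ℕ → ℕ} (hf : RecursiveIn' O fun n => Part.some (f n))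
    (hg : Computable g) : RecursiveIn' O fun n => Part.some (f (g n)) :=
  (hf.comp (of_computable hg)).of_eq fun n => by
    show Part.bind _ _ = _
    simp

/-- Compose a computable function (outside) with a recursive-in total function. -/
theorem compTotal' {f g : ℕ → ℕ} (hf : Computable f)
    (hg : RecursiveIn' O fun n => Part.some (g n)) :
    RecursiveIn' O fun n => Part.some (f (g n)) :=
  ((of_computable hf).comp hg).of_eq fun n => by
    show Part.bind _ _ = _
    exact Part.bind_some _ _

theorem pair' {f g : ℕ → ℕ} (hf : RecursiveIn' O fun n => Part.some (f n))
    (hg : RecursiveIn' O fun n => Part.some (g n)) :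
    RecursiveIn' O fun n => Part.some (Nat.pair (f n) (g n)) :=
  (hf.pair hg).of_eq fun n => by simp [Seq.seq]

end RecursiveIn'

/-- Decode a natural number as a list of booleans (default `[]`). -/
def decList (m : ℕ) : List Bool := (Encodable.decode (α := List Bool) m).getD []

theorem decList_encode (l : List Bool) : decList (Encodable.encode l) = l := by
  simp [decList]

theorem primrec_decList : Primrec decList :=
  (Primrec.option_getD).comp Primrec.decode (Primrec.const [])

theorem immunity_lemma_proof (A : ℕ → Bool) (S : Set ℕ)
    (hS : S = {m | ∃ n : ℕ, m = Encodable.encode (List.ofFn fun i : Fin n => A i)}) :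
    TuringReducible' S {n | A n} ∧
      ∀ B : ℕ → Bool, ∀ C : Set ℕ, C ⊆ S → C.Infinite →
        TuringReducible' C {n | B n} → TuringReducible' {n | A n} {n | B n} := by
  classical
  set O₁ : ℕ → ℕ := ({n | A n} : Set ℕ).indicator 1 with hO₁
  -- the code of the initial segment of `A` of length `n`
  set seg : ℕ → ℕ := fun n => Encodable.encode (List.ofFn fun i : Fin n => A i) with hsegdef
  have hO₁val : ∀ n, O₁ n = if A n then 1 else 0 := by
    intro n
    by_cases h : A n <;> simp [hO₁, Set.indicator, h]
  have hdecseg : ∀ n, decList (seg n) = List.ofFn fun i : Fin n => A i := by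
    intro n
    rw [hsegdef]
    exact decList_encode _
  have hseglen : ∀ n, (decList (seg n)).length = n := by
    intro n
    rw [hdecseg, List.length_ofFn]
  -- `seg` is recursive in `A`
  have hseg : RecursiveIn' O₁ fun n => Part.some (seg n) := by
    -- step function (as a plain computable function of `(oracle value, previous code)`)
    set T : ℕ → ℕ := fun q =>
      Encodable.encode (decList q.unpair.2 ++ [decide (q.unpair.1 = 1)]) with hTdef
    have hT : Computable T := by
      have : Primrec T :=
        Primrec.encode.comp <| Primrec.list_concat.comp
          (primrec_decList.comp (Primrec.snd.comp Primrec.unpair))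
          (PrimrecRel.comp Primrec.eq (Primrec.fst.comp Primrec.unpair) (Primrec.const 1)).decide
      exact this.to_comp
    set k : ℕ → ℕ := fun p => Nat.pair (O₁ p.unpair.2.unpair.1) p.unpair.2.unpair.2
      with hkdef
    have hk : RecursiveIn' O₁ fun p => Part.some (k p) := by
      refine RecursiveIn'.pair' ?_ ?_
      · exact RecursiveIn'.totalComp' RecursiveIn'.oracle'
          (Primrec.to_comp <| Primrec.fst.comp <| Primrec.unpair.comp <|
            Primrec.snd.comp Primrec.unpair)
      · exact RecursiveIn'.of_computable' (Primrec.to_comp <| Primrec.snd.comp <|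
          Primrec.unpair.comp <| Primrec.snd.comp Primrec.unpair)
    have hstep : RecursiveIn' O₁ fun p => Part.some (T (k p)) :=
      RecursiveIn'.compTotal' hT hk
    have hprec := RecursiveIn'.prec RecursiveIn'.zero hstep
    have hpair0 : Computable fun n : ℕ => Nat.pair 0 n :=
      (Primrec₂.natPair.comp (Primrec.const 0) Primrec.id).to_comp
    have hTk : ∀ n, T (k (Nat.pair 0 (Nat.pair n (seg n)))) = seg (n + 1) := by
      intro n
      have hA : decide (O₁ n = 1) = A n := by
        rw [hO₁val]; cases hAn : A n <;> simp
      have hd : decList (seg n) = List.ofFn fun i : Fin n => A i := hdecseg n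
      rw [hTdef]
      simp only [hkdef, Nat.unpair_pair, hd, hA, hsegdef]
      congr 1
      rw [List.ofFn_succ' (fun i : Fin (n + 1) => A i), List.concat_eq_append]
      simp [Fin.coe_castSucc, Fin.val_last]
      exact decList_encode _
    have := RecursiveIn'.totalCompGen hprec hpair0
    refine this.of_eq fun n => ?_
    simp only [Nat.unpaired, Nat.unpair_pair]
    induction n with
    | zero =>
      show Part.some 0 = Part.some (seg 0)
      simp [hsegdef, List.ofFn_zero]
    | succ n ih =>
      show (Nat.rec (Part.some 0)
          (fun y IH => IH >>= fun i => Part.some (T (k (Nat.pair 0 (Nat.pair y i)))))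
          n : Part ℕ) >>= (fun i => Part.some (T (k (Nat.pair 0 (Nat.pair n i))))) =
          Part.some (seg (n + 1))
      have ih' : (Nat.rec (Part.some 0)
          (fun y IH => IH >>= fun i => Part.some (T (k (Nat.pair 0 (Nat.pair y i)))))
          n : Part ℕ) = Part.some (seg n) := ih
      rw [ih', Part.bind_eq_bind, Part.bind_some, hTk]
  constructor
  · -- Part 1: S ≤_T A
    set F : ℕ → ℕ := fun m => Nat.pair (seg ((decList m).length)) m with hFdef
    have hlen : Computable fun m : ℕ => (decList m).length :=
      (Primrec.list_length.comp primrec_decList).to_comp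
    have hF : RecursiveIn' O₁ fun m => Part.some (F m) :=
      RecursiveIn'.pair' (RecursiveIn'.totalComp' hseg hlen)
        (RecursiveIn'.of_computable' Computable.id)
    have heq : Computable fun q : ℕ => if q.unpair.1 = q.unpair.2 then 1 else 0 := by
      have : Primrec fun q : ℕ => if q.unpair.1 = q.unpair.2 then 1 else 0 :=
        Primrec.ite (PrimrecRel.comp Primrec.eq (Primrec.fst.comp Primrec.unpair)
          (Primrec.snd.comp Primrec.unpair)) (Primrec.const 1) (Primrec.const 0)
      exact this.to_comp
    have hfin := RecursiveIn'.compTotal' heq hF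
    refine hfin.of_eq fun m => ?_
    congr 1
    simp only [hFdef, Nat.unpair_pair]
    by_cases hm : m ∈ S
    · obtain ⟨n, rfl⟩ := hS ▸ hm
      have : seg ((decList (seg n)).length) = seg n := by rw [hseglen n]
      rw [show Encodable.encode (List.ofFn fun i : Fin n => A i) = seg n from rfl]
      rw [this, if_pos rfl]
      rw [Set.indicator_of_mem hm]
      rfl
    · have hne : ¬ seg ((decList m).length) = m := by
        intro h
        exact hm (hS ▸ ⟨(decList m).length, h.symm⟩)
      rw [if_neg hne, Set.indicator_of_notMem hm]
  · -- Part 2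
    intro B C hCS hCinf hC
    set O₂ : ℕ → ℕ := ({n | B n} : Set ℕ).indicator 1 with hO₂
    have hC' : RecursiveIn' O₂ fun n => Part.some (C.indicator 1 n) := hC
    -- lengths of elements of C are unbounded
    have hub : ∀ a : ℕ, ∃ m ∈ C, a < (decList m).length := by
      intro a
      by_contra h
      push_neg at h
      apply hCinf
      have hsub : C ⊆ seg '' Set.Iic a := by
        intro m hm
        obtain ⟨n, rfl⟩ := hS ▸ hCS hm
        refine ⟨n, ?_, rfl⟩
        have := h _ hm
        rwa [show Encodable.encode (List.ofFn fun i : Fin n => A i) = seg n from rfl,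
          hseglen n] at this
      exact ((Set.finite_Iic a).image _).subset hsub
    have hCind : ∀ m, C.indicator 1 m = if m ∈ C then 1 else 0 := by
      intro m
      by_cases h : m ∈ C <;> simp [Set.indicator, h]
    -- the search predicate
    set U : ℕ → ℕ := fun q =>
      if q.unpair.1 = 1 ∧ q.unpair.2.unpair.1 < (decList q.unpair.2.unpair.2).length
      then 0 else 1 with hUdef
    have hU : Computable U := by
      have : Primrec U :=
        Primrec.ite
          (PrimrecPred.and
            (PrimrecRel.comp Primrec.eq (Primrec.fst.comp Primrec.unpair) (Primrec.const 1))
            (PrimrecRel.comp Primrec.nat_lt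
              (Primrec.fst.comp (Primrec.unpair.comp (Primrec.snd.comp Primrec.unpair)))
              (Primrec.list_length.comp (primrec_decList.comp
                (Primrec.snd.comp (Primrec.unpair.comp (Primrec.snd.comp Primrec.unpair)))))))
          (Primrec.const 0) (Primrec.const 1)
      exact this.to_comp
    have hq : RecursiveIn' O₂ fun p => Part.some (Nat.pair (C.indicator 1 p.unpair.2) p) :=
      RecursiveIn'.pair'
        (RecursiveIn'.totalComp' hC' (Primrec.to_comp (Primrec.snd.comp Primrec.unpair)))
        (RecursiveIn'.of_computable' Computable.id)
    have hfpred : RecursiveIn' O₂ fun p =>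
        Part.some (U (Nat.pair (C.indicator 1 p.unpair.2) p)) :=
      RecursiveIn'.compTotal' hU hq
    have hR := RecursiveIn'.rfind hfpred
    -- the value-extraction function
    set V : ℕ → ℕ := fun q => cond ((decList q.unpair.2).getD q.unpair.1 false) 1 0
      with hVdef
    have hV : Computable V := by
      have : Primrec V :=
        Primrec.cond
          ((Primrec.list_getD false).comp
            (primrec_decList.comp (Primrec.snd.comp Primrec.unpair))
            (Primrec.fst.comp Primrec.unpair))
          (Primrec.const 1) (Primrec.const 0)
      exact this.to_comp
    have hpairR := RecursiveIn'.pair (RecursiveIn'.of_computable' Computable.id) hR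
    have hfinal := RecursiveIn'.comp (RecursiveIn'.of_computable hV) hpairR
    refine hfinal.of_eq fun a => ?_
    set p : ℕ →. Bool := fun n =>
      (fun m => decide (m = 0)) <$>
        Part.some (U (Nat.pair (C.indicator 1 (Nat.unpair (Nat.pair a n)).2) (Nat.pair a n)))
      with hpdef
    have hpval : ∀ n, p n =
        Part.some (decide (U (Nat.pair (C.indicator 1 n) (Nat.pair a n)) = 0)) := by
      intro n
      simp [hpdef]
    obtain ⟨m₀, hm₀C, hm₀len⟩ := hub a
    have hptrue : ∀ m', m' ∈ C → a < (decList m').length → true ∈ p m' := by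
      intro m' hmC hmlen
      rw [hpval]
      have hU0 : U (Nat.pair (C.indicator 1 m') (Nat.pair a m')) = 0 := by
        rw [hUdef]
        simp only [Nat.unpair_pair]
        rw [if_pos ⟨by rw [hCind, if_pos hmC], hmlen⟩]
      simp [hU0]
    have hdom : (Nat.rfind p).Dom := by
      rw [Nat.rfind_dom]
      exact ⟨m₀, hptrue m₀ hm₀C hm₀len, fun {m'} _ => by rw [hpval]; trivial⟩
    obtain ⟨m, hmem⟩ := Part.dom_iff_mem.1 hdom
    have hspec := Nat.rfind_spec hmem
    rw [hpval] at hspec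
    have hU0 : U (Nat.pair (C.indicator 1 m) (Nat.pair a m)) = 0 :=
      of_decide_eq_true (Part.mem_some_iff.1 hspec).symm
    have hcond : C.indicator 1 m = 1 ∧ a < (decList m).length := by
      by_contra hcontra
      rw [hUdef] at hU0
      simp only [Nat.unpair_pair] at hU0
      rw [if_neg hcontra] at hU0
      exact one_ne_zero hU0
    have hmC : m ∈ C := by
      by_contra h
      rw [hCind, if_neg h] at hcond
      exact zero_ne_one hcond.1
    have halen : a < (decList m).length := hcond.2
    obtain ⟨n, hmn⟩ := hS ▸ hCS hmC
    have hmseg : m = seg n := hmn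
    subst hmseg
    have haln : a < n := by rwa [hseglen] at halen
    have hVval : V (Nat.pair a (seg n)) = ({n | A n = true} : Set ℕ).indicator 1 a := by
      rw [hVdef]
      simp only [Nat.unpair_pair, hdecseg n]
      have hlt : a < (List.ofFn fun i : Fin n => A i).length := by
        rw [List.length_ofFn]; exact haln
      rw [List.getD_eq_getElem _ _ hlt, List.getElem_ofFn]
      by_cases h : A a <;> simp [Set.indicator, h]
    rw [Part.eq_some_iff, ← hVval]
    refine Part.mem_bind_iff.2 ⟨Nat.pair a (seg n), ?_, Part.mem_some _⟩
    simp only [Seq.seq, Part.map_eq_map, id]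
    exact Part.mem_bind_iff.2 ⟨Nat.pair a, (Part.mem_map_iff _).2 ⟨a, Part.mem_some a, rfl⟩,
      (Part.mem_map_iff _).2 ⟨seg n, hmem, rfl⟩⟩
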